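/- Let r, t be positive integers, Σ an r×t real rectangular diagonal matrix with nonnegative diagonal entries, ε > 0, and Δ a complex r×t matrix with spectral norm ‖Δ‖₂ ≤ ε. For any subset S of {1,…,min(r,t)}, let Σ(S) and Δ(S) denote the |S|×|S| submatrices of Σ and Δ obtained by keeping exactly the rows and columns whose indices lie in S. Then det[ (Σ(S) + Δ(S))ᴴ (Σ(S) + Δ(S)) ] ≥ ∏_{j∈S} max{ςⱼⱼ − ε, 0}². -/

import Mathlib

open Matrix

/-- The spectral norm (ℓ²→ℓ² operator norm, i.e. largest singular value) of a complex matrix. -/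
noncomputable def specNorm {m n : ℕ} (A : Matrix (Fin m) (Fin n) ℂ) : ℝ :=
  ‖LinearMap.toContinuousLinearMap (Matrix.toEuclideanLin A)‖

/-- The `j`-th diagonal entry of a rectangular matrix, extended by `0` out of range. -/
noncomputable def diagEntry {r t : ℕ} (S : Matrix (Fin r) (Fin t) ℝ) (j : ℕ) : ℝ :=
  if h : j < r ∧ j < t then S ⟨j, h.1⟩ ⟨j, h.2⟩ else 0


open Finset

lemma sorted_pointwise {n : ℕ} {A L : Fin n → ℝ} (hA : Monotone A) (hL : Monotone L)
    (hcount : ∀ c : ℝ, (univ.filter fun i => L i < c).card ≤ (univ.filter fun i => A i < c).card) :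
    ∀ k, A k ≤ L k := by
  intro k
  by_contra h
  push_neg at h
  have h1 : Finset.Iic k ⊆ univ.filter fun i => L i < A k := by
    intro i hi
    simp only [mem_filter, mem_univ, true_and]
    exact lt_of_le_of_lt (hL (Finset.mem_Iic.mp hi)) h
  have h2 : (univ.filter fun i => A i < A k) ⊆ Finset.Iio k := by
    intro i hi
    simp only [mem_filter, mem_univ, true_and] at hi
    simp only [Finset.mem_Iio]
    by_contra hik
    exact absurd (hA (le_of_not_gt hik)) (not_le.mpr hi)
  have := (Finset.card_le_card h1).trans ((hcount (A k)).trans (Finset.card_le_card h2))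
  rw [Fin.card_Iic, Fin.card_Iio] at this
  omega

lemma prod_le_of_count {ι : Type*} [Fintype ι] [DecidableEq ι] (a l : ι → ℝ)
    (ha : ∀ i, 0 ≤ a i)
    (hcount : ∀ c : ℝ, (univ.filter fun i => l i < c).card ≤ (univ.filter fun i => a i < c).card) :
    ∏ i, a i ≤ ∏ i, l i := by
  classical
  obtain e := (Fintype.equivFin ι).symm
  set n := Fintype.card ι
  -- transfer counting to Fin n
  have key : ∀ (f : ι → ℝ) (c : ℝ),
      (univ.filter fun k : Fin n => f (e k) < c).card = (univ.filter fun i => f i < c).card := by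
    intro f c
    apply Finset.card_bij (fun k _ => e k)
    · intro k hk; simp only [mem_filter, mem_univ, true_and] at hk ⊢; exact hk
    · intro k₁ _ k₂ _ hk; exact e.injective hk
    · intro i hi; exact ⟨e.symm i, by simpa using hi, by simp⟩
  set A₀ : Fin n → ℝ := fun k => a (e k) with hA₀
  set L₀ : Fin n → ℝ := fun k => l (e k) with hL₀
  set σ := Tuple.sort A₀
  set τ := Tuple.sort L₀
  have hcount2 : ∀ c : ℝ, (univ.filter fun k => (L₀ ∘ τ) k < c).card
      ≤ (univ.filter fun k => (A₀ ∘ σ) k < c).card := by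
    intro c
    have e1 : (univ.filter fun k => (A₀ ∘ σ) k < c).card = (univ.filter fun k => A₀ k < c).card := by
      apply Finset.card_bij (fun k _ => σ k)
      · intro k hk; simpa using by simpa using hk
      · intro k₁ _ k₂ _ hk; exact σ.injective hk
      · intro i hi; exact ⟨σ.symm i, by simpa using hi, by simp⟩
    have e2 : (univ.filter fun k => (L₀ ∘ τ) k < c).card = (univ.filter fun k => L₀ k < c).card := by
      apply Finset.card_bij (fun k _ => τ k)
      · intro k hk; simpa using by simpa using hk
      · intro k₁ _ k₂ _ hk; exact τ.injective hk
      · intro i hi; exact ⟨τ.symm i, by simpa using hi, by simp⟩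
    rw [e1, e2, key, key]
    exact hcount c
  have hpt := sorted_pointwise (Tuple.monotone_sort A₀) (Tuple.monotone_sort L₀) hcount2
  have hprod : ∏ k, (A₀ ∘ σ) k ≤ ∏ k, (L₀ ∘ τ) k := by
    apply Finset.prod_le_prod
    · intro k _; exact ha _
    · intro k _; exact hpt k
  have ea : ∏ i, a i = ∏ k, (A₀ ∘ σ) k := by
    rw [show (∏ k, (A₀ ∘ σ) k) = ∏ k, A₀ (σ k) from rfl, Equiv.prod_comp σ A₀, hA₀,
      Equiv.prod_comp e a]
  have el : ∏ k, (L₀ ∘ τ) k = ∏ i, l i := by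
    rw [show (∏ k, (L₀ ∘ τ) k) = ∏ k, L₀ (τ k) from rfl, Equiv.prod_comp τ L₀, hL₀,
      Equiv.prod_comp e l]
  rw [ea, ← el]; exact hprod

open Matrix Finset

lemma dot_star_self {ι : Type*} [Fintype ι] (w : ι → ℂ) :
    star w ⬝ᵥ w = ((∑ i, ‖w i‖^2 : ℝ) : ℂ) := by
  rw [Complex.ofReal_sum]
  apply Finset.sum_congr rfl
  intro i _
  simpa using RCLike.conj_mul (w i)

lemma card_small_eigen_le {ι : Type*} [Fintype ι] [DecidableEq ι] (M : Matrix ι ι ℂ)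
    (hH : (Mᴴ * M).IsHermitian) (c : ℝ) (T : Finset ι)
    (hquad : ∀ y : ι → ℂ, (∀ j, j ∉ T → y j = 0) →
      c * ∑ j, ‖y j‖^2 ≤ ∑ j, ‖(M *ᵥ y) j‖^2) :
    (univ.filter fun i => hH.eigenvalues i < c).card + T.card ≤ Fintype.card ι := by
  by_contra hlt
  push_neg at hlt
  set P := univ.filter fun i => hH.eigenvalues i < c with hP
  set Pc := univ.filter fun i => ¬ hH.eigenvalues i < c with hPcdef
  have hPc : P.card + Pc.card = Fintype.card ι := by
    rw [hP, hPcdef, Finset.card_filter_add_card_filter_not, Finset.card_univ]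
  have hcard : Pc.card < T.card := by omega
  have ext : (↥T → ℂ) → (ι → ℂ) := fun x j => if h : j ∈ T then x ⟨j, h⟩ else 0
  clear ext
  set ext : (↥T → ℂ) → (ι → ℂ) := fun x j => if h : j ∈ T then x ⟨j, h⟩ else 0 with hext
  have ext_add : ∀ x y, ext (x + y) = ext x + ext y := by
    intro x y; funext j; simp only [hext, Pi.add_apply]
    split <;> simp
  have ext_smul : ∀ (c : ℂ) x, ext (c • x) = c • ext x := by
    intro d x; funext j; simp only [hext, Pi.smul_apply, smul_eq_mul]
    split <;> simp
  set ψ : (↥T → ℂ) →ₗ[ℂ] (↥Pc → ℂ) :=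
    { toFun := fun x => fun i =>
        (star (hH.eigenvectorUnitary : Matrix ι ι ℂ) *ᵥ ext x) i.1
      map_add' := by
        intro x y; funext i
        show (star (hH.eigenvectorUnitary : Matrix ι ι ℂ) *ᵥ ext (x + y)) i.1
          = (star (hH.eigenvectorUnitary : Matrix ι ι ℂ) *ᵥ ext x) i.1
            + (star (hH.eigenvectorUnitary : Matrix ι ι ℂ) *ᵥ ext y) i.1
        rw [ext_add, mulVec_add]; rfl
      map_smul' := by
        intro d x; funext i
        show (star (hH.eigenvectorUnitary : Matrix ι ι ℂ) *ᵥ ext (d • x)) i.1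
          = d • ((star (hH.eigenvectorUnitary : Matrix ι ι ℂ) *ᵥ ext x) i.1)
        rw [ext_smul, mulVec_smul]; rfl } with hψ
  have hninj : ¬ Function.Injective ψ := by
    intro hinj
    have := LinearMap.finrank_le_finrank_of_injective hinj
    rw [Module.finrank_fintype_fun_eq_card, Module.finrank_fintype_fun_eq_card,
      Fintype.card_coe, Fintype.card_coe] at this
    omega
  obtain ⟨x₁, x₂, hx12, hxne⟩ := Function.not_injective_iff.mp hninj
  set x := x₁ - x₂ with hx
  have hψx : ψ x = 0 := by rw [hx, map_sub, hx12, sub_self]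
  have hxne0 : x ≠ 0 := sub_ne_zero_of_ne hxne
  set y := ext x with hy
  have hy0 : ∀ j, j ∉ T → y j = 0 := by
    intro j hj; simp only [hy, hext, dif_neg hj]
  have hyne : ∃ j, y j ≠ 0 := by
    obtain ⟨j0, hj0⟩ := Function.ne_iff.mp hxne0
    refine ⟨j0.1, ?_⟩
    simpa only [hy, hext, dif_pos j0.2, Subtype.coe_eta, Pi.zero_apply] using hj0
  set z := star (hH.eigenvectorUnitary : Matrix ι ι ℂ) *ᵥ y with hz
  have hzP : ∀ i, i ∉ P → z i = 0 := by
    intro i hi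
    have hiPc : i ∈ Pc := by
      simp only [hPcdef, mem_filter, mem_univ, true_and]
      simpa [hP] using hi
    exact congrFun hψx ⟨i, hiPc⟩
  have hUU : (hH.eigenvectorUnitary : Matrix ι ι ℂ)
      * star (hH.eigenvectorUnitary : Matrix ι ι ℂ) = 1 :=
    Matrix.mem_unitaryGroup_iff.mp hH.eigenvectorUnitary.2
  have hUU' : (hH.eigenvectorUnitary : Matrix ι ι ℂ)
      * ((hH.eigenvectorUnitary : Matrix ι ι ℂ))ᴴ = 1 := by
    exact hUU
  have hsz : star y ᵥ* (hH.eigenvectorUnitary : Matrix ι ι ℂ) = star z := by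
    rw [hz, star_mulVec, star_eq_conjTranspose, conjTranspose_conjTranspose]
  have hzy : ∑ i, ‖z i‖^2 = ∑ j, ‖y j‖^2 := by
    have h1 : star z ⬝ᵥ z = star y ⬝ᵥ y := by
      rw [hz, star_mulVec, ← dotProduct_mulVec, mulVec_mulVec,
        star_eq_conjTranspose (hH.eigenvectorUnitary : Matrix ι ι ℂ),
        conjTranspose_conjTranspose, hUU', one_mulVec]
    have := h1
    rw [dot_star_self, dot_star_self] at this
    exact_mod_cast this
  set q := star y ⬝ᵥ ((Mᴴ * M) *ᵥ y) with hq
  have hq1 : q = ((∑ j, ‖(M *ᵥ y) j‖^2 : ℝ) : ℂ) := by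
    rw [hq, ← mulVec_mulVec, dotProduct_mulVec, ← star_mulVec, dot_star_self]
  have hq2 : q = ((∑ i, hH.eigenvalues i * ‖z i‖^2 : ℝ) : ℂ) := by
    have e1 : q = star z ⬝ᵥ (diagonal (RCLike.ofReal ∘ hH.eigenvalues) *ᵥ z) := by
      rw [hq]
      conv_lhs => rw [hH.spectral_theorem, Unitary.conjStarAlgAut_apply]
      rw [← mulVec_mulVec, ← mulVec_mulVec, dotProduct_mulVec, hsz, ← hz]
    rw [e1, Complex.ofReal_sum]
    simp only [dotProduct, mulVec_diagonal, Function.comp_apply, Pi.star_apply]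
    refine Finset.sum_congr rfl fun i _ => ?_
    have h := RCLike.conj_mul (z i)
    calc star (z i) * (RCLike.ofReal (hH.eigenvalues i) * z i)
        = RCLike.ofReal (hH.eigenvalues i) * ((starRingEnd ℂ) (z i) * z i) := by
          rw [show star (z i) = (starRingEnd ℂ) (z i) from rfl]; ring
      _ = ((hH.eigenvalues i * ‖z i‖^2 : ℝ) : ℂ) := by
          rw [h]; norm_cast
  have heq : ∑ j, ‖(M *ᵥ y) j‖^2 = ∑ i, hH.eigenvalues i * ‖z i‖^2 := by
    have := hq1.symm.trans hq2
    exact_mod_cast this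
  have hSy : 0 < ∑ j, ‖y j‖^2 := by
    obtain ⟨j0, hj0⟩ := hyne
    apply Finset.sum_pos' (fun j _ => by positivity)
    exact ⟨j0, mem_univ _, pow_pos (norm_pos_iff.mpr hj0) 2⟩
  have hzex : ∃ i, z i ≠ 0 := by
    by_contra hc
    push_neg at hc
    have : ∑ i, ‖z i‖^2 = 0 := by
      apply Finset.sum_eq_zero; intro i _; rw [hc i]; simp
    rw [hzy] at this
    linarith
  obtain ⟨i0, hi0⟩ := hzex
  have hi0P : i0 ∈ P := by
    by_contra hc; exact hi0 (hzP i0 hc)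
  have hlam : hH.eigenvalues i0 < c := by
    simpa [hP] using hi0P
  have hup : ∑ i, hH.eigenvalues i * ‖z i‖^2 < ∑ i, c * ‖z i‖^2 := by
    apply Finset.sum_lt_sum
    · intro i _
      by_cases hiP : i ∈ P
      · have : hH.eigenvalues i < c := by simpa [hP] using hiP
        exact mul_le_mul_of_nonneg_right this.le (by positivity)
      · rw [hzP i hiP]; simp
    · exact ⟨i0, mem_univ _, mul_lt_mul_of_pos_right hlam (pow_pos (norm_pos_iff.mpr hi0) 2)⟩
  rw [← Finset.mul_sum, hzy] at hup
  have hlow := hquad y hy0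
  rw [heq] at hlow
  linarith

open Matrix Finset


lemma euc_norm_sq {ι : Type*} [Fintype ι] (w : ι → ℂ) :
    ‖(WithLp.equiv 2 (ι → ℂ)).symm w‖ ^ 2 = ∑ i, ‖w i‖^2 := by
  rw [EuclideanSpace.norm_eq]
  rw [Real.sq_sqrt (by positivity)]
  rfl

lemma euc_norm_eq {ι : Type*} [Fintype ι] (w : ι → ℂ) :
    ‖(WithLp.equiv 2 (ι → ℂ)).symm w‖ = Real.sqrt (∑ i, ‖w i‖^2) := by
  rw [EuclideanSpace.norm_eq]; rfl

lemma mulVec_l2_bound {t r : ℕ} (Δ : Matrix (Fin r) (Fin t) ℂ) (ε : ℝ)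
    (hΔ : specNorm Δ ≤ ε) (v : Fin t → ℂ) :
    Real.sqrt (∑ i, ‖(Δ *ᵥ v) i‖^2) ≤ ε * Real.sqrt (∑ b, ‖v b‖^2) := by
  set L := LinearMap.toContinuousLinearMap (Matrix.toEuclideanLin Δ) with hL
  set X : EuclideanSpace ℂ (Fin t) := (WithLp.equiv 2 (Fin t → ℂ)).symm v with hX
  have h1 : L X = (WithLp.equiv 2 (Fin r → ℂ)).symm (Δ *ᵥ v) := by
    rw [hL, LinearMap.coe_toContinuousLinearMap', hX, Matrix.toEuclideanLin_apply]
    congr 1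
  have h2 : ‖L X‖ ≤ ε * ‖X‖ := by
    calc ‖L X‖ ≤ ‖L‖ * ‖X‖ := L.le_opNorm X
      _ ≤ ε * ‖X‖ := by
          apply mul_le_mul_of_nonneg_right _ (norm_nonneg _)
          exact hΔ
  rw [h1, euc_norm_eq] at h2
  rw [hX, euc_norm_eq] at h2
  exact h2

lemma submatrix_l2_bound {ι : Type*} [Fintype ι] [DecidableEq ι] {r t : ℕ}
    (Δ : Matrix (Fin r) (Fin t) ℂ) (ε : ℝ) (hε : 0 ≤ ε) (hΔ : specNorm Δ ≤ ε)
    (f : ι → Fin r) (g : ι → Fin t) (hf : Function.Injective f) (hg : Function.Injective g)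
    (y : ι → ℂ) :
    ∑ j, ‖((Δ.submatrix f g) *ᵥ y) j‖^2 ≤ ε^2 * ∑ j, ‖y j‖^2 := by
  set v : Fin t → ℂ := fun b => ∑ j, if g j = b then y j else 0 with hv
  have hv1 : ∀ j, v (g j) = y j := by
    intro j
    show (∑ j', if g j' = g j then y j' else 0) = y j
    rw [Finset.sum_eq_single_of_mem j (mem_univ j)]
    · rw [if_pos rfl]
    · intro j' _ hj'
      rw [if_neg (fun h => hj' (hg h))]
  have hv0 : ∀ b, (∀ j, g j ≠ b) → v b = 0 := by
    intro b hb
    show (∑ j, if g j = b then y j else 0) = 0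
    exact Finset.sum_eq_zero fun j _ => if_neg (hb j)
  have hEv : ∀ j, ((Δ.submatrix f g) *ᵥ y) j = (Δ *ᵥ v) (f j) := by
    intro j
    show ∑ j', Δ (f j) (g j') * y j' = ∑ b, Δ (f j) b * v b
    have step1 : ∀ b, Δ (f j) b * v b = ∑ j', if g j' = b then Δ (f j) (g j') * y j' else 0 := by
      intro b
      rw [show v b = ∑ j', if g j' = b then y j' else 0 from rfl, Finset.mul_sum]
      refine Finset.sum_congr rfl fun j' _ => ?_
      by_cases h : g j' = b
      · rw [if_pos h, if_pos h, h]
      · rw [if_neg h, if_neg h, mul_zero]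
    rw [Finset.sum_congr rfl (fun b _ => step1 b), Finset.sum_comm]
    apply Finset.sum_congr rfl
    intro j' _
    rw [Finset.sum_eq_single_of_mem (g j') (mem_univ _)
      (fun b _ hb => if_neg (fun h => hb h.symm)), if_pos rfl]
  have hsum1 : ∑ j, ‖((Δ.submatrix f g) *ᵥ y) j‖^2 ≤ ∑ i, ‖(Δ *ᵥ v) i‖^2 := by
    calc ∑ j, ‖((Δ.submatrix f g) *ᵥ y) j‖^2 = ∑ j, ‖(Δ *ᵥ v) (f j)‖^2 := by
          exact Finset.sum_congr rfl fun j _ => by rw [hEv]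
      _ = ∑ i ∈ univ.image f, ‖(Δ *ᵥ v) i‖^2 := by
          rw [Finset.sum_image (fun a _ b _ h => hf h)]
      _ ≤ ∑ i, ‖(Δ *ᵥ v) i‖^2 := by
          apply Finset.sum_le_sum_of_subset_of_nonneg (Finset.subset_univ _)
          intro i _ _; positivity
  have hsum2 : ∑ b, ‖v b‖^2 = ∑ j, ‖y j‖^2 := by
    rw [← Finset.sum_subset (Finset.subset_univ (univ.image g))
      (fun b _ hb => by
        rw [hv0 b (fun j hj => hb (Finset.mem_image.mpr ⟨j, mem_univ j, hj⟩))]; simp),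
      Finset.sum_image (fun a _ b _ h => hg h)]
    exact Finset.sum_congr rfl fun j _ => by rw [hv1]
  have hop := mulVec_l2_bound Δ ε hΔ v
  have h3 : ∑ i, ‖(Δ *ᵥ v) i‖^2 ≤ ε^2 * ∑ b, ‖v b‖^2 := by
    have hnn : (0:ℝ) ≤ ∑ i, ‖(Δ *ᵥ v) i‖^2 := by positivity
    have hnn2 : (0:ℝ) ≤ ∑ b, ‖v b‖^2 := by positivity
    have := mul_self_le_mul_self (Real.sqrt_nonneg _) hop
    rw [Real.mul_self_sqrt hnn] at this
    calc ∑ i, ‖(Δ *ᵥ v) i‖^2 ≤ (ε * Real.sqrt (∑ b, ‖v b‖^2)) * (ε * Real.sqrt (∑ b, ‖v b‖^2)) := this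
      _ = ε^2 * (Real.sqrt (∑ b, ‖v b‖^2) * Real.sqrt (∑ b, ‖v b‖^2)) := by ring
      _ = ε^2 * ∑ b, ‖v b‖^2 := by rw [Real.mul_self_sqrt hnn2]
  calc ∑ j, ‖((Δ.submatrix f g) *ᵥ y) j‖^2 ≤ ∑ i, ‖(Δ *ᵥ v) i‖^2 := hsum1
    _ ≤ ε^2 * ∑ b, ‖v b‖^2 := h3
    _ = ε^2 * ∑ j, ‖y j‖^2 := by rw [hsum2]

lemma quad_lower {ι : Type*} [Fintype ι] [DecidableEq ι] (d : ι → ℝ) (E : Matrix ι ι ℂ)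
    (ε s : ℝ) (hs : 0 ≤ s) (hε : 0 ≤ ε)
    (hE : ∀ y : ι → ℂ, ∑ j, ‖(E *ᵥ y) j‖^2 ≤ ε^2 * ∑ j, ‖y j‖^2)
    (T : Finset ι) (hd : ∀ j ∈ T, ε + s ≤ d j)
    (y : ι → ℂ) (hy : ∀ j, j ∉ T → y j = 0) :
    s^2 * ∑ j, ‖y j‖^2 ≤ ∑ j, ‖((diagonal (fun j => (d j : ℂ)) + E) *ᵥ y) j‖^2 := by
  set Dm : Matrix ι ι ℂ := diagonal (fun j => (d j : ℂ)) with hDm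
  have hDlow : (ε + s)^2 * ∑ j, ‖y j‖^2 ≤ ∑ j, ‖(Dm *ᵥ y) j‖^2 := by
    rw [Finset.mul_sum]
    apply Finset.sum_le_sum
    intro j _
    rw [hDm, mulVec_diagonal, norm_mul]
    by_cases hj : j ∈ T
    · have h1 : ε + s ≤ ‖(d j : ℂ)‖ := by
        rw [Complex.norm_real]
        exact (hd j hj).trans (le_abs_self _)
      rw [mul_pow]
      apply mul_le_mul_of_nonneg_right _ (by positivity)
      exact pow_le_pow_left₀ (by positivity) h1 2
    · rw [hy j hj]; simp
  -- triangle inequality in EuclideanSpace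
  set X1 : EuclideanSpace ℂ ι := (WithLp.equiv 2 (ι → ℂ)).symm (Dm *ᵥ y) with hX1
  set X2 : EuclideanSpace ℂ ι := (WithLp.equiv 2 (ι → ℂ)).symm (E *ᵥ y) with hX2
  have hadd : (WithLp.equiv 2 (ι → ℂ)).symm ((Dm + E) *ᵥ y) = X1 + X2 := by
    rw [hX1, hX2, add_mulVec]
    rfl
  have htri : ‖X1‖ ≤ ‖X1 + X2‖ + ‖X2‖ := by
    have h := norm_add_le (X1 + X2) (-X2)
    simpa using h
  set ny := Real.sqrt (∑ j, ‖y j‖^2) with hny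
  have hny2 : ny * ny = ∑ j, ‖y j‖^2 := Real.mul_self_sqrt (by positivity)
  have h1 : (ε + s) * ny ≤ ‖X1‖ := by
    rw [hX1, euc_norm_eq]
    rw [show (ε + s) * ny = Real.sqrt (((ε+s)*ny)^2) from
      (Real.sqrt_sq (by positivity)).symm]
    apply Real.sqrt_le_sqrt
    calc ((ε+s)*ny)^2 = (ε+s)^2 * (ny * ny) := by ring
      _ = (ε+s)^2 * ∑ j, ‖y j‖^2 := by rw [hny2]
      _ ≤ _ := hDlow
  have h2 : ‖X2‖ ≤ ε * ny := by
    rw [hX2, euc_norm_eq]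
    rw [show ε * ny = Real.sqrt ((ε*ny)^2) from (Real.sqrt_sq (by positivity)).symm]
    apply Real.sqrt_le_sqrt
    calc ∑ j, ‖(E *ᵥ y) j‖^2 ≤ ε^2 * ∑ j, ‖y j‖^2 := hE y
      _ = (ε*ny)^2 := by rw [← hny2]; ring
  have h3 : s * ny ≤ ‖X1 + X2‖ := by
    have := htri
    nlinarith [norm_nonneg (X1 + X2)]
  have h4 : (s * ny)^2 ≤ ‖X1 + X2‖^2 := by
    apply pow_le_pow_left₀ (by positivity) h3
  rw [← hadd, euc_norm_sq] at h4
  calc s^2 * ∑ j, ‖y j‖^2 = (s * ny)^2 := by rw [← hny2]; ring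
    _ ≤ _ := h4

theorem stmt4 (r t : ℕ) (hr : 0 < r) (ht : 0 < t)
    (Sig : Matrix (Fin r) (Fin t) ℝ)
    (hSdiag : ∀ (i : Fin r) (j : Fin t), (i : ℕ) ≠ (j : ℕ) → Sig i j = 0)
    (hSpos : ∀ j, 0 ≤ diagEntry Sig j)
    (ε : ℝ) (hε : 0 < ε)
    (Δ : Matrix (Fin r) (Fin t) ℂ) (hΔ : specNorm Δ ≤ ε)
    (S : Finset (Fin (min r t))) :
    -- the |S|×|S| submatrix of Σ + Δ keeping rows and columns indexed by S
    let M : Matrix S S ℂ := Matrix.submatrix (Sig.map Complex.ofReal + Δ)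
      (fun i : S => Fin.castLE (min_le_left r t) i.1)
      (fun j : S => Fin.castLE (min_le_right r t) j.1)
    ((Mᴴ * M).det).im = 0 ∧
    (∏ j ∈ S, max (diagEntry Sig j - ε) 0 ^ 2) ≤ ((Mᴴ * M).det).re := by
  intro M
  classical
  have hH : (Mᴴ * M).IsHermitian := isHermitian_conjTranspose_mul_self M
  have hnneg : ∀ i, 0 ≤ hH.eigenvalues i := fun i =>
    Matrix.eigenvalues_conjTranspose_mul_self_nonneg M i
  have hdet : (Mᴴ * M).det = ((∏ i, hH.eigenvalues i : ℝ) : ℂ) := by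
    rw [hH.det_eq_prod_eigenvalues, Complex.ofReal_prod]
    rfl
  refine ⟨by rw [hdet]; exact Complex.ofReal_im _, ?_⟩
  rw [hdet, Complex.ofReal_re]
  set f : ↥S → Fin r := fun i => Fin.castLE (min_le_left r t) i.1 with hf
  set g : ↥S → Fin t := fun j => Fin.castLE (min_le_right r t) j.1 with hg
  have hfinj : Function.Injective f := by
    intro i j h
    apply Subtype.ext
    apply Fin.ext
    have h2 := congrArg Fin.val h
    exact h2
  have hginj : Function.Injective g := by
    intro i j h
    apply Subtype.ext
    apply Fin.ext
    have h2 := congrArg Fin.val h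
    exact h2
  have hd_eq : ∀ i : ↥S, diagEntry Sig (i.1 : ℕ) = Sig (f i) (g i) := by
    intro i
    have h1 : (i.1 : ℕ) < r := lt_of_lt_of_le i.1.2 (min_le_left r t)
    have h2 : (i.1 : ℕ) < t := lt_of_lt_of_le i.1.2 (min_le_right r t)
    rw [diagEntry, dif_pos ⟨h1, h2⟩]
    rfl
  have hMdec : M = diagonal (fun j : ↥S => ((diagEntry Sig (j.1 : ℕ) : ℝ) : ℂ))
      + Δ.submatrix f g := by
    ext i j
    by_cases hij : i = j
    · subst hij
      show Complex.ofReal (Sig (f i) (g i)) + Δ (f i) (g i) = _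
      rw [Matrix.add_apply, Matrix.diagonal_apply_eq, Matrix.submatrix_apply, hd_eq]
    · have hne : ((i.1 : Fin (min r t)) : ℕ) ≠ ((j.1 : Fin (min r t)) : ℕ) := by
        intro h; exact hij (Subtype.ext (Fin.ext h))
      show Complex.ofReal (Sig (f i) (g j)) + Δ (f i) (g j) = _
      rw [Matrix.add_apply, Matrix.diagonal_apply_ne _ hij, Matrix.submatrix_apply,
        hSdiag (f i) (g j) hne, Complex.ofReal_zero, zero_add]
  set a : ↥S → ℝ := fun j => max (diagEntry Sig (j.1 : ℕ) - ε) 0 ^ 2 with ha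
  have hcount : ∀ c : ℝ, (Finset.univ.filter fun i => hH.eigenvalues i < c).card
      ≤ (Finset.univ.filter fun j => a j < c).card := by
    intro c
    by_cases hc : c ≤ 0
    · have hempty : (Finset.univ.filter fun i => hH.eigenvalues i < c) = ∅ := by
        rw [Finset.filter_eq_empty_iff]
        intro i _
        push_neg
        exact le_trans hc (hnneg i)
      rw [hempty]
      simp
    · push_neg at hc
      set T := Finset.univ.filter (fun j : ↥S => ¬ a j < c) with hT
      set s := Real.sqrt c with hs
      have hsc : s ^ 2 = c := Real.sq_sqrt hc.le
      have hspos : 0 < s := Real.sqrt_pos.mpr hc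
      have hdT : ∀ j ∈ T, ε + s ≤ diagEntry Sig (j.1 : ℕ) := by
        intro j hj
        have hj' : c ≤ a j := not_lt.mp (by simpa [hT] using (Finset.mem_filter.mp hj).2)
        have h1 : s ≤ max (diagEntry Sig (j.1 : ℕ) - ε) 0 := by
          by_contra hcon
          push_neg at hcon
          have h2 : (max (diagEntry Sig (j.1 : ℕ) - ε) 0) ^ 2 < s ^ 2 :=
            pow_lt_pow_left₀ hcon (le_max_right _ _) (by norm_num)
          rw [hsc] at h2
          rw [ha] at hj'
          simp only at hj'
          linarith
        rcases le_max_iff.mp h1 with h | h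
        · linarith
        · linarith
      have hquad : ∀ y : ↥S → ℂ, (∀ j, j ∉ T → y j = 0) →
          c * ∑ j, ‖y j‖ ^ 2 ≤ ∑ j, ‖(M *ᵥ y) j‖ ^ 2 := by
        intro y hy
        have hkey := quad_lower (fun j : ↥S => diagEntry Sig (j.1 : ℕ)) (Δ.submatrix f g)
          ε s hspos.le hε.le
          (fun w => submatrix_l2_bound Δ ε hε.le hΔ f g hfinj hginj w) T hdT y hy
        rw [← hMdec, hsc] at hkey
        exact hkey
      have hmain := card_small_eigen_le M hH c T hquad
      have hsplit : (Finset.univ.filter fun j => a j < c).card + T.card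
          = Fintype.card ↥S := by
        rw [hT, Finset.card_filter_add_card_filter_not, Finset.card_univ]
      omega
  have hfinal := prod_le_of_count a hH.eigenvalues (fun j => by positivity) hcount
  calc ∏ j ∈ S, max (diagEntry Sig ↑j - ε) 0 ^ 2 = ∏ j : ↥S, a j :=
        (Finset.prod_coe_sort S _).symm
    _ ≤ ∏ i, hH.eigenvalues i := hfinal
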